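/- For the Boolean function f(x₁,…,xₘ) = ⋁ᵢ xᵢ with m ≥ 2, any decision tree computing f exactly (where every internal node tests one variable, each variable is only tested when non-constant on the data reaching the node, and each path is logically consistent) contains a path of length m, consisting of literals xᵢ₁ = 0, …, x_{i_{m-1}} = 0, x_{iₘ} = 1, whose consistent instance has an AXp of size 1. -/

import Mathlib

/-- Binary decision trees over Boolean features. -/
inductive DTree (m : ℕ) : Type where
  | leaf (b : Bool) : DTree m
  | node (i : Fin m) (t0 t1 : DTree m) : DTree m

/-- Evaluation of a decision tree on a point. -/
def DTree.eval {m : ℕ} : DTree m → (Fin m → Bool) → Bool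
  | .leaf b, _ => b
  | .node i t0 t1, x => if x i then (t1.eval x) else (t0.eval x)

/-- The (unique) root-to-leaf path consistent with a point, as the list of
(feature, value) literals tested along it. -/
def DTree.path {m : ℕ} : DTree m → (Fin m → Bool) → List (Fin m × Bool)
  | .leaf _, _ => []
  | .node i t0 t1, x =>
      (i, x i) :: (if x i then (t1.path x) else (t0.path x))

lemma DTree.mem_path {m} (T : DTree m) (x : Fin m → Bool) :
    ∀ p ∈ T.path x, x p.1 = p.2 := by
  induction T with
  | leaf b => simp [DTree.path]
  | node i t0 t1 ih0 ih1 =>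
    intro p hp
    simp only [DTree.path, List.mem_cons] at hp
    rcases hp with rfl | hp
    · rfl
    · by_cases h : x i
      · simp [h] at hp; exact ih1 p hp
      · simp [h] at hp; exact ih0 p hp

lemma DTree.agree {m} (T : DTree m) (x y : Fin m → Bool)
    (h : ∀ p ∈ T.path x, y p.1 = p.2) :
    T.path y = T.path x ∧ T.eval y = T.eval x := by
  induction T with
  | leaf b => simp [DTree.path, DTree.eval]
  | node i t0 t1 ih0 ih1 =>
    have hi : y i = x i := h (i, x i) (by simp [DTree.path])
    by_cases hx : x i
    · have := ih1 (fun p hp => h p (by simp [DTree.path, hx, hp]))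
      simp [DTree.path, DTree.eval, hi, hx, this.1, this.2]
    · have := ih0 (fun p hp => h p (by simp [DTree.path, hx, hp]))
      simp [DTree.path, DTree.eval, hi, hx, this.1, this.2]

lemma DTree.flip_last {m} (T : DTree m) (x y : Fin m → Bool) (j : Fin m) (b : Bool)
    (pre : List (Fin m × Bool)) (hdec : T.path x = pre ++ [(j, b)])
    (hagree : ∀ p ∈ pre, y p.1 = p.2) :
    ∃ rest, T.path y = pre ++ (j, y j) :: rest := by
  induction T generalizing pre with
  | leaf c => simp [DTree.path] at hdec
  | node i t0 t1 ih0 ih1 =>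
    have hpath : (DTree.node i t0 t1).path x
        = (i, x i) :: (if x i then t1.path x else t0.path x) := rfl
    have hpathy : (DTree.node i t0 t1).path y
        = (i, y i) :: (if y i then t1.path y else t0.path y) := rfl
    rw [hpath] at hdec
    rcases pre with _ | ⟨q, pre'⟩
    · simp at hdec
      obtain ⟨⟨hij, _⟩, htail⟩ := hdec
      refine ⟨(if y i then t1.path y else t0.path y), ?_⟩
      rw [hpathy, hij]
      simp
    · simp only [List.cons_append, List.cons.injEq] at hdec
      obtain ⟨hq, htail⟩ := hdec
      have hyi : y i = x i := by
        have := hagree q (by simp)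
        rw [← hq] at this
        exact this
      by_cases hx : x i
      · rw [if_pos hx] at htail
        obtain ⟨rest, hrest⟩ := ih1 pre' htail (fun p hp => hagree p (by simp [hp]))
        exact ⟨rest, by rw [hpathy, hyi, if_pos hx, hrest, ← hq]; simp⟩
      · rw [if_neg hx] at htail
        obtain ⟨rest, hrest⟩ := ih0 pre' htail (fun p hp => hagree p (by simp [hp]))
        exact ⟨rest, by rw [hpathy, hyi, if_neg hx, hrest, ← hq]; simp⟩

/-- Any decision tree computing the OR function f(x) = ⋁ᵢ xᵢ exactly (with no
feature repeated along any path, as implied by consistency and non-constancy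
of tested features) contains a path of length m with literals
x_{i₁}=0, …, x_{i_{m-1}}=0, x_{iₘ}=1, whose consistent instance has an AXp of
size 1. -/
theorem or_dtree_has_long_path_with_unit_axp (m : ℕ) (hm : 2 ≤ m) (T : DTree m)
    (hexact : ∀ x, T.eval x = true ↔ ∃ i, x i = true)
    (hnodup : ∀ x, ((T.path x).map Prod.fst).Nodup) :
    ∃ x : Fin m → Bool,
      (T.path x).length = m ∧
      (T.path x).map Prod.snd = List.replicate (m - 1) false ++ [true] ∧
      ∃ X : Finset (Fin m), X.card = 1 ∧
        (∀ y, (∀ i ∈ X, y i = x i) → T.eval y = T.eval x) ∧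
        (∀ X' ⊂ X, ¬ ∀ y, (∀ i ∈ X', y i = x i) → T.eval y = T.eval x) := by
  classical
  set x0 : Fin m → Bool := fun _ => false with hx0
  have hev0 : T.eval x0 = false := by
    rcases Bool.eq_false_or_eq_true (T.eval x0) with h | h
    swap
    · exact h
    · obtain ⟨i, hi⟩ := (hexact x0).1 h
      simp [hx0] at hi
  -- all literals of the all-false path are false
  have hfalse : ∀ p ∈ T.path x0, p.2 = false := by
    intro p hp
    have := T.mem_path x0 p hp
    simpa [hx0] using this.symm
  -- every feature appears on the all-false path
  have hall : ∀ j : Fin m, j ∈ (T.path x0).map Prod.fst := by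
    intro j
    by_contra hj
    set y := Function.update x0 j true with hy
    have hag : ∀ p ∈ T.path x0, y p.1 = p.2 := by
      intro p hp
      have hne : p.1 ≠ j := fun h => hj (h ▸ List.mem_map_of_mem (f := Prod.fst) hp)
      rw [hy, Function.update_of_ne hne, hfalse p hp]
    have := (T.agree x0 y hag).2
    have hyt : T.eval y = true := (hexact y).2 ⟨j, by simp [hy]⟩
    rw [this, hev0] at hyt
    exact Bool.false_ne_true hyt
  -- hence the path has length m
  have hlen0 : (T.path x0).length = m := by
    have hnd := hnodup x0
    have hcard : ((T.path x0).map Prod.fst).toFinset = Finset.univ :=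
      Finset.eq_univ_iff_forall.2 (fun j => List.mem_toFinset.2 (hall j))
    have := List.toFinset_card_of_nodup hnd
    rw [hcard] at this
    simp at this
    simpa using this.symm
  have hne0 : T.path x0 ≠ [] := by
    intro h; rw [h] at hlen0; simp at hlen0; omega
  -- decompose the path: pre ++ [(j, false)]
  set q := (T.path x0).getLast hne0 with hq
  set j := q.1 with hj
  set pre := (T.path x0).dropLast with hpre
  have hq2 : q.2 = false := hfalse q (List.getLast_mem hne0)
  have hdec : T.path x0 = pre ++ [(j, false)] := by
    conv_lhs => rw [← List.dropLast_append_getLast hne0]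
    rw [← hq, ← hq2]
  have hprelen : pre.length = m - 1 := by
    rw [hpre, List.length_dropLast, hlen0]
  have hjpre : j ∉ pre.map Prod.fst := by
    have hnd := hnodup x0
    rw [hdec] at hnd
    simp only [List.map_append, List.map_cons, List.map_nil] at hnd
    have := List.disjoint_of_nodup_append hnd
    intro hmem
    exact this hmem (by simp)
  have hprefalse : ∀ p ∈ pre, p.2 = false := fun p hp =>
    hfalse p ((List.dropLast_sublist _).mem hp)
  -- the flipped instance
  set x := Function.update x0 j true with hx
  have hxj : x j = true := by simp [hx]
  have hagree : ∀ p ∈ pre, x p.1 = p.2 := by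
    intro p hp
    have hne : p.1 ≠ j := fun h => hjpre (h ▸ List.mem_map_of_mem (f := Prod.fst) hp)
    rw [hx, Function.update_of_ne hne, hprefalse p hp]
  obtain ⟨rest, hrest⟩ := T.flip_last x0 x j false pre hdec hagree
  have hrestnil : rest = [] := by
    have hnd := hnodup x
    rw [hrest] at hnd
    have hle := List.Nodup.length_le_card hnd
    simp only [List.length_map, List.length_append, List.length_cons,
      Fintype.card_fin] at hle
    rw [hprelen] at hle
    have : rest.length = 0 := by omega
    exact List.length_eq_zero_iff.1 this
  rw [hrestnil] at hrest
  have hpathx : T.path x = pre ++ [(j, true)] := by rw [hrest, hxj]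
  have hevx : T.eval x = true := (hexact x).2 ⟨j, hxj⟩
  refine ⟨x, ?_, ?_, {j}, Finset.card_singleton j, ?_, ?_⟩
  · rw [hpathx]; simp only [List.length_append, List.length_cons, List.length_nil, hprelen]; omega
  · rw [hpathx]
    simp only [List.map_append, List.map_cons, List.map_nil]
    congr 1
    apply List.eq_replicate_iff.2
    constructor
    · simp [hprelen]
    · intro b hb
      simp only [List.mem_map] at hb
      obtain ⟨p, hp, rfl⟩ := hb
      exact hprefalse p hp
  · intro y hy
    have hyj : y j = true := by rw [hy j (Finset.mem_singleton_self j), hxj]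
    rw [hevx, (hexact y).2 ⟨j, hyj⟩]
  · intro X' hX' hforall
    have hX'e : X' = ∅ := Finset.eq_empty_of_ssubset_singleton hX'
    have := hforall x0 (by simp [hX'e])
    rw [hev0, hevx] at this
    exact Bool.false_ne_true this
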